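/- Let 𝒱 be a vector space partition of F_2^8 such that every member has even dimension. Then the multiset of dimensions of 𝒱 is one of: {8}, {6 together with 64 copies of 2}, or {5i copies of 2 together with 17−i copies of 4} for some 0 ≤ i ≤ 17. -/
import Mathlib


open Finset

/-- `Vec n` is the vector space `F_2^n`. -/
abbrev Vec (n : ℕ) := Fin n → ZMod 2

/-- The standard dot product on `F_2^n`. -/
def dotp {n : ℕ} (a b : Vec n) : ZMod 2 := ∑ i, a i * b i

/-- The difference (derivative) function `D_{F,a}(x) = F(x) + F(x+a)`. -/
def Dder {n : ℕ} (F : Vec n → Vec n) (a x : Vec n) : Vec n := F x + F (x + a)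

/-- The linear hyperplane `H_b = {x : ⟨b,x⟩ = 0}`. -/
def Hyp {n : ℕ} (b : Vec n) : Set (Vec n) := {x | dotp b x = 0}

/-- The affine hyperplane `H̄_b = {x : ⟨b,x⟩ = 1}`. -/
def HypBar {n : ℕ} (b : Vec n) : Set (Vec n) := {x | dotp b x = 1}

/-- `T_b = {a : image(D_{F,a}) = H_b} ∪ {0}`. -/
def Tset {n : ℕ} (F : Vec n → Vec n) (b : Vec n) : Set (Vec n) :=
  {a | Set.range (Dder F a) = Hyp b} ∪ {0}

/-- `T̄_b = {a : image(D_{F,a}) = H̄_b}`. -/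
def TsetBar {n : ℕ} (F : Vec n → Vec n) (b : Vec n) : Set (Vec n) :=
  {a | Set.range (Dder F a) = HypBar b}

/-- `V_b = T_b ∪ T̄_b`. -/
def Vset {n : ℕ} (F : Vec n → Vec n) (b : Vec n) : Set (Vec n) := Tset F b ∪ TsetBar F b

/-- `F` is quadratic: all second derivatives are constant (algebraic degree ≤ 2). -/
def IsQuadratic {n m : ℕ} (F : Vec n → Vec m) : Prop :=
  ∀ a₁ a₂ : Vec n, ∃ c : Vec m, ∀ x, F (x + a₁ + a₂) + F (x + a₁) + F (x + a₂) + F x = c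

/-- `F` is APN: every equation `F(x) + F(x+a) = b`, `a ≠ 0`, has at most 2 solutions. -/
def IsAPN {n : ℕ} (F : Vec n → Vec n) : Prop :=
  ∀ a : Vec n, a ≠ 0 → ∀ b : Vec n, Nat.card {x : Vec n // F x + F (x + a) = b} ≤ 2

/-- The Walsh transform `W_F(b,a) = Σ_x (-1)^{⟨b,F(x)⟩ + ⟨a,x⟩}`. -/
def Walsh {n m : ℕ} (F : Vec n → Vec m) (b : Vec m) (a : Vec n) : ℤ :=
  ∑ x : Vec n, (-1 : ℤ) ^ ((dotp b (F x) + dotp a x).val)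

/-- The component `F_b` is bent: `|W_F(b,a)| = 2^{n/2}` for all `a`. -/
def IsBent {n m : ℕ} (F : Vec n → Vec m) (b : Vec m) : Prop :=
  ∀ a : Vec n, (Walsh F b a) ^ 2 = 2 ^ n

/-- The set `N_F` of non-trivial non-bent components of `F`. -/
def NF {n m : ℕ} (F : Vec n → Vec m) : Set (Vec m) := {b | b ≠ 0 ∧ ¬ IsBent F b}

/-- A vector space partition of `F_q^n`: a collection of nonzero subspaces such that
every nonzero vector lies in exactly one member. -/
def IsVSP {K : Type} [Field K] {n : ℕ} (𝒱 : Finset (Submodule K (Fin n → K))) : Prop :=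
  (∀ S ∈ 𝒱, S ≠ ⊥) ∧
  ∀ x : Fin n → K, x ≠ 0 → ∃! S : Submodule K (Fin n → K), S ∈ 𝒱 ∧ x ∈ S

/-- A blocking set of `PG(m,2)` (identified with `F_2^{m+1} \ {0}`) with respect to
`k`-spaces (nonzero parts of `(k+1)`-dimensional subspaces). -/
def PGBlocking (m k : ℕ) (B : Set (Fin (m + 1) → ZMod 2)) : Prop :=
  0 ∉ B ∧ ∀ S : Submodule (ZMod 2) (Fin (m + 1) → ZMod 2),
    Module.finrank (ZMod 2) S = k + 1 → ∃ x ∈ B, x ∈ S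

/-- `F_b` has amplitude `2^{(n+k)/2}`. -/
def HasAmp {n m : ℕ} (F : Vec n → Vec m) (b : Vec m) (k : ℕ) : Prop :=
  (∀ a, (Walsh F b a) ^ 2 = 0 ∨ (Walsh F b a) ^ 2 = 2 ^ (n + k)) ∧
  ∃ a, (Walsh F b a) ^ 2 = 2 ^ (n + k)

theorem stmt_10 (𝒱 : Finset (Submodule (ZMod 2) (Fin 8 → ZMod 2)))
    (h : IsVSP 𝒱) (heven : ∀ S ∈ 𝒱, Even (Module.finrank (ZMod 2) S)) :
    𝒱.val.map (fun S : Submodule (ZMod 2) (Fin 8 → ZMod 2) => Module.finrank (ZMod 2) S) = ({8} : Multiset ℕ) ∨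
    𝒱.val.map (fun S : Submodule (ZMod 2) (Fin 8 → ZMod 2) => Module.finrank (ZMod 2) S) =
      Multiset.replicate 64 2 + {6} ∨
    ∃ i ≤ 17, 𝒱.val.map (fun S : Submodule (ZMod 2) (Fin 8 → ZMod 2) => Module.finrank (ZMod 2) S) =
      Multiset.replicate (5 * i) 2 + Multiset.replicate (17 - i) 4 := by
  classical
  obtain ⟨hne, huniq⟩ := h
  set d : Submodule (ZMod 2) (Fin 8 → ZMod 2) → ℕ :=
    fun S => Module.finrank (ZMod 2) S with hd
  -- distinct members intersect trivially
  have hdisj : ∀ S ∈ 𝒱, ∀ T ∈ 𝒱, S ≠ T → ∀ x : Fin 8 → ZMod 2, x ∈ S → x ∈ T → x = 0 := by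
    intro S hS T hT hST x hxS hxT
    by_contra hx0
    obtain ⟨U, _, hUuniq⟩ := huniq x hx0
    exact hST ((hUuniq S ⟨hS, hxS⟩).trans (hUuniq T ⟨hT, hxT⟩).symm)
  have hrtop : Module.finrank (ZMod 2) (Fin 8 → ZMod 2) = 8 :=
    Module.finrank_fin_fun (ZMod 2)
  have hd8 : ∀ S ∈ 𝒱, d S ≤ 8 := by
    intro S hS
    have := Submodule.finrank_le S
    simp only [hd]
    omega
  have hd2 : ∀ S ∈ 𝒱, 2 ≤ d S := by
    intro S hS
    have h1 : 0 < d S := by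
      simp only [hd]
      rw [Module.finrank_pos_iff]
      exact Submodule.nontrivial_iff_ne_bot.mpr (hne S hS)
    obtain ⟨k, hk⟩ := heven S hS
    have hk' : d S = k + k := hk
    omega
  have hpair : ∀ S ∈ 𝒱, ∀ T ∈ 𝒱, S ≠ T → d S + d T ≤ 8 := by
    intro S hS T hT hST
    have hbot : S ⊓ T = ⊥ := by
      rw [eq_bot_iff]
      intro x hx
      rw [Submodule.mem_bot]
      exact hdisj S hS T hT hST x hx.1 hx.2
    have h1 := Submodule.finrank_sup_add_finrank_inf_eq S T
    rw [hbot] at h1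
    have h2 : Module.finrank (ZMod 2) ↥(S ⊔ T) ≤ 8 := by
      have := Submodule.finrank_le (S ⊔ T)
      omega
    simp only [finrank_bot] at h1
    simp only [hd]
    omega
  -- the counting identity
  have hcardS : ∀ S ∈ 𝒱,
      ((univ : Finset (Fin 8 → ZMod 2)).filter (fun x => x ∈ S)).card = 2 ^ d S := by
    intro S hS
    have h1 : ((univ : Finset (Fin 8 → ZMod 2)).filter (fun x => x ∈ S)).card
        = Fintype.card {x : Fin 8 → ZMod 2 // x ∈ S} := (Fintype.card_subtype _).symm
    rw [h1]
    have h2 : Fintype.card {x : Fin 8 → ZMod 2 // x ∈ S} = Nat.card S :=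
      (Nat.card_eq_fintype_card).symm
    rw [h2]
    have h3 : Nat.card S = Fintype.card S := Nat.card_eq_fintype_card
    rw [h3]
    rw [Module.card_eq_pow_finrank (K := ZMod 2) (V := S), ZMod.card]
  set X : Finset (Fin 8 → ZMod 2) := univ.filter (fun x => x ≠ 0) with hX
  have hXcard : X.card = 255 := by
    rw [hX]
    have : (univ.filter (fun x : Fin 8 → ZMod 2 => x ≠ 0)) = univ.erase 0 := by
      ext x; simp [Finset.mem_erase]
    rw [this, Finset.card_erase_of_mem (Finset.mem_univ _)]
    norm_num [Finset.card_univ, Fintype.card_fun, ZMod.card]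
  have hfilcard : ∀ S ∈ 𝒱, (X.filter (fun x => x ∈ S)).card = 2 ^ d S - 1 := by
    intro S hS
    have heq : X.filter (fun x => x ∈ S)
        = ((univ : Finset (Fin 8 → ZMod 2)).filter (fun x => x ∈ S)).erase 0 := by
      ext x
      simp only [hX, Finset.mem_filter, Finset.mem_erase, Finset.mem_univ, true_and]
      try tauto
    rw [heq, Finset.card_erase_of_mem (by simp [Submodule.zero_mem]), hcardS S hS]
  have hXunion : X = 𝒱.biUnion (fun S => X.filter (fun x => x ∈ S)) := by
    ext x
    simp only [Finset.mem_biUnion, Finset.mem_filter]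
    constructor
    · intro hx
      have hx0 : x ≠ 0 := by simpa [hX] using hx
      obtain ⟨S, ⟨hS, hxS⟩, _⟩ := huniq x hx0
      exact ⟨S, hS, hx, hxS⟩
    · rintro ⟨S, _, hx, _⟩
      exact hx
  have hsum : ∑ S ∈ 𝒱, (2 ^ d S - 1) = 255 := by
    have hdj : ∀ S ∈ 𝒱, ∀ T ∈ 𝒱, S ≠ T →
        Disjoint (X.filter (fun x => x ∈ S)) (X.filter (fun x => x ∈ T)) := by
      intro S hS T hT hST
      rw [Finset.disjoint_left]
      intro x hxS hxT
      simp only [hX, Finset.mem_filter, Finset.mem_univ, true_and] at hxS hxT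
      exact hxS.1 (hdisj S hS T hT hST x hxS.2 hxT.2)
    have := Finset.card_biUnion hdj
    rw [← hXunion, hXcard] at this
    rw [this]
    exact Finset.sum_congr rfl (fun S hS => (hfilcard S hS).symm)
  -- case analysis
  by_cases h8 : ∃ S ∈ 𝒱, d S = 8
  · left
    obtain ⟨S, hS, hS8⟩ := h8
    have h1 : 𝒱 = {S} := by
      apply Finset.eq_singleton_iff_unique_mem.mpr
      refine ⟨hS, fun T hT => ?_⟩
      by_contra hTS
      have := hpair T hT S hS hTS
      have := hd2 T hT
      omega
    rw [h1]
    simp [hd] at hS8 ⊢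
    exact hS8
  · by_cases h6 : ∃ S ∈ 𝒱, d S = 6
    · right; left
      obtain ⟨S, hS, hS6⟩ := h6
      have hT2 : ∀ T ∈ 𝒱, T ≠ S → d T = 2 := by
        intro T hT hTS
        have := hpair T hT S hS hTS
        have := hd2 T hT
        obtain ⟨k, hk⟩ := heven T hT
        have hk' : d T = k + k := hk
        omega
      have hsum' : 2 ^ d S - 1 + ∑ T ∈ 𝒱.erase S, (2 ^ d T - 1) = 255 := by
        rw [Finset.add_sum_erase 𝒱 (fun T => 2 ^ d T - 1) hS]; exact hsum
      have hsum3 : ∑ T ∈ 𝒱.erase S, (2 ^ d T - 1) = 3 * (𝒱.erase S).card := by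
        have h3 : ∀ T ∈ 𝒱.erase S, 2 ^ d T - 1 = 3 := by
          intro T hT
          rw [Finset.mem_erase] at hT
          rw [hT2 T hT.2 hT.1]
          norm_num
        rw [Finset.sum_congr rfl h3, Finset.sum_const, smul_eq_mul, mul_comm]
      have hcard64 : (𝒱.erase S).card = 64 := by
        rw [hsum3, hS6] at hsum'
        norm_num at hsum'
        omega
      have hvval : 𝒱.val = S ::ₘ (𝒱.erase S).val := by
        rw [Finset.erase_val]
        exact (Multiset.cons_erase (by exact hS)).symm
      rw [hvval, Multiset.map_cons]
      have hrep : (𝒱.erase S).val.map d = Multiset.replicate 64 2 := by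
        rw [Multiset.eq_replicate]
        constructor
        · rw [Multiset.card_map]
          exact hcard64
        · intro b hb
          obtain ⟨T, hT, rfl⟩ := Multiset.mem_map.mp hb
          rw [← Finset.mem_def, Finset.mem_erase] at hT
          exact hT2 T hT.2 hT.1
      show (d S) ::ₘ (𝒱.erase S).val.map d = _
      rw [hrep, hS6, add_comm, Multiset.singleton_add]
    · right; right
      have hT24 : ∀ T ∈ 𝒱, d T = 2 ∨ d T = 4 := by
        intro T hT
        have h1 := hd2 T hT
        have h2 := hd8 T hT
        obtain ⟨k, hk⟩ := heven T hT
        have h3 : d T ≠ 8 := fun hc => h8 ⟨T, hT, hc⟩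
        have h4 : d T ≠ 6 := fun hc => h6 ⟨T, hT, hc⟩
        have hk' : d T = k + k := hk
        omega
      set A : Finset (Submodule (ZMod 2) (Fin 8 → ZMod 2)) :=
        𝒱.filter (fun T => d T = 4) with hA
      set B : Finset (Submodule (ZMod 2) (Fin 8 → ZMod 2)) :=
        𝒱.filter (fun T => ¬ d T = 4) with hB
      have hsumA : ∑ T ∈ A, (2 ^ d T - 1) = 15 * A.card := by
        have h3 : ∀ T ∈ A, 2 ^ d T - 1 = 15 := by
          intro T hT
          rw [hA, Finset.mem_filter] at hT
          rw [hT.2]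
          norm_num
        rw [Finset.sum_congr rfl h3, Finset.sum_const, smul_eq_mul, mul_comm]
      have hsumB : ∑ T ∈ B, (2 ^ d T - 1) = 3 * B.card := by
        have h3 : ∀ T ∈ B, 2 ^ d T - 1 = 3 := by
          intro T hT
          rw [hB, Finset.mem_filter] at hT
          have := hT24 T hT.1
          have h2 : d T = 2 := by omega
          rw [h2]
          norm_num
        rw [Finset.sum_congr rfl h3, Finset.sum_const, smul_eq_mul, mul_comm]
      have hsplit : ∑ T ∈ A, (2 ^ d T - 1) + ∑ T ∈ B, (2 ^ d T - 1) = 255 := by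
        rw [hA, hB, Finset.sum_filter_add_sum_filter_not]
        exact hsum
      rw [hsumA, hsumB] at hsplit
      have ha17 : A.card ≤ 17 := by omega
      have hb : B.card = 5 * (17 - A.card) := by omega
      refine ⟨17 - A.card, by omega, ?_⟩
      have hvval : 𝒱.val = A.val + B.val := by
        rw [hA, hB, Finset.filter_val, Finset.filter_val]
        exact (Multiset.filter_add_not _ _).symm
      rw [hvval, Multiset.map_add]
      have hrepA : A.val.map d = Multiset.replicate A.card 4 := by
        rw [Multiset.eq_replicate]
        refine ⟨by rw [Multiset.card_map]; rfl, ?_⟩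
        intro b hb'
        obtain ⟨T, hT, rfl⟩ := Multiset.mem_map.mp hb'
        rw [← Finset.mem_def, hA, Finset.mem_filter] at hT
        exact hT.2
      have hrepB : B.val.map d = Multiset.replicate B.card 2 := by
        rw [Multiset.eq_replicate]
        refine ⟨by rw [Multiset.card_map]; rfl, ?_⟩
        intro b hb'
        obtain ⟨T, hT, rfl⟩ := Multiset.mem_map.mp hb'
        rw [← Finset.mem_def, hB, Finset.mem_filter] at hT
        have := hT24 T hT.1
        omega
      rw [hrepA, hrepB, hb]
      have h17 : 17 - (17 - A.card) = A.card := by omega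
      rw [h17, add_comm]
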